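/- For a Hermitian n×n matrix A and 1 ≤ k ≤ n, the sum of the k largest eigenvalues of A equals the maximum of ∑_{j=1}^k ⟨A x_j, x_j⟩ over all orthonormal families x₁, …, x_k in ℂⁿ. -/

import Mathlib

open Matrix ComplexOrder

noncomputable def matFun {n : ℕ} (f : ℝ → ℝ) (A : Matrix (Fin n) (Fin n) ℂ) :
    Matrix (Fin n) (Fin n) ℂ :=
  if hA : A.IsHermitian then
    (hA.eigenvectorUnitary : Matrix (Fin n) (Fin n) ℂ) *
      Matrix.diagonal (fun i => (f (hA.eigenvalues i) : ℂ)) *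
      (hA.eigenvectorUnitary : Matrix (Fin n) (Fin n) ℂ)ᴴ
  else 0

/-- `lam A j` : the `j`-th largest eigenvalue (0-indexed) of a Hermitian matrix `A`. -/
noncomputable def lam {n : ℕ} (A : Matrix (Fin n) (Fin n) ℂ) (j : ℕ) : ℝ :=
  if hA : A.IsHermitian then
    if h : j < n then (hA.eigenvalues ∘ Tuple.sort hA.eigenvalues) ((⟨j, h⟩ : Fin n).rev)
    else 0
  else 0

/-- Loewner order. -/
def loewnerLE {n : ℕ} (A B : Matrix (Fin n) (Fin n) ℂ) : Prop := (B - A).PosSemidef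

/-- `|B| = (B^* B)^{1/2}`. -/
noncomputable def matAbs {n : ℕ} (B : Matrix (Fin n) (Fin n) ℂ) : Matrix (Fin n) (Fin n) ℂ :=
  ((Matrix.posSemidef_conjTranspose_mul_self B).1.eigenvectorUnitary : Matrix (Fin n) (Fin n) ℂ) *
    Matrix.diagonal (fun i =>
      ((Real.sqrt ((Matrix.posSemidef_conjTranspose_mul_self B).1.eigenvalues i) : ℝ) : ℂ)) *
    (star (Matrix.posSemidef_conjTranspose_mul_self B).1.eigenvectorUnitary : Matrix (Fin n) (Fin n) ℂ)

/-- `|B|^r` via functional calculus. -/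
noncomputable def matAbsPow {n : ℕ} (B : Matrix (Fin n) (Fin n) ℂ) (r : ℝ) :
    Matrix (Fin n) (Fin n) ℂ :=
  matFun (fun t => t ^ r) (matAbs B)

/-- Abel-summation style bound: for a monotone `g` and weights `c` in `[0,1]` summing
to `k`, the weighted sum is at most the sum of the `k` largest values of `g`. -/
lemma kyfan_key {n k : ℕ} (hk1 : 1 ≤ k) (hkn : k ≤ n) (g : Fin n → ℝ) (hg : Monotone g)
    (c : Fin n → ℝ) (hc0 : ∀ i, 0 ≤ c i) (hc1 : ∀ i, c i ≤ 1) (hsum : ∑ i, c i = k) :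
    ∑ i, g i * c i ≤ ∑ j : Fin k, g ((Fin.castLE hkn j).rev) := by
  have hnk : n - k < n := by omega
  classical
  have hinj : Function.Injective (fun j : Fin k => (Fin.castLE hkn j).rev) := by
    intro a b h
    have := congrArg Fin.val h
    simp only [Fin.val_rev, Fin.coe_castLE] at this
    exact Fin.ext (by omega)
  set T : Finset (Fin n) := Finset.image (fun j : Fin k => (Fin.castLE hkn j).rev) Finset.univ
    with hT
  have hmem : ∀ t : Fin n, t ∈ T ↔ n - k ≤ (t : ℕ) := by
    intro t
    simp only [hT, Finset.mem_image, Finset.mem_univ, true_and]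
    constructor
    · rintro ⟨j, rfl⟩
      simp only [Fin.val_rev, Fin.coe_castLE]
      omega
    · intro ht
      refine ⟨⟨n - 1 - t, by omega⟩, Fin.ext ?_⟩
      simp only [Fin.val_rev, Fin.coe_castLE]
      omega
  have hcard : T.card = k := by
    rw [hT, Finset.card_image_of_injective _ hinj, Finset.card_univ, Fintype.card_fin]
  have hTsum : ∑ t ∈ T, g t = ∑ j : Fin k, g ((Fin.castLE hkn j).rev) :=
    Finset.sum_image (fun a _ b _ h => hinj h)
  set μ := g ⟨n - k, hnk⟩ with hμ
  have e1 : ∑ i, g i * c i = (∑ i, (g i - μ) * c i) + μ * k := by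
    rw [← hsum, Finset.mul_sum, ← Finset.sum_add_distrib]
    exact Finset.sum_congr rfl fun i _ => by ring
  have hTle : ∀ t ∈ T, (g t - μ) * c t ≤ g t - μ := by
    intro t ht
    have h1 : μ ≤ g t := hg (by rw [Fin.le_def]; exact (hmem t).1 ht)
    exact mul_le_of_le_one_right (by linarith) (hc1 t)
  have hTcle : ∀ t ∈ Tᶜ, (g t - μ) * c t ≤ 0 := by
    intro t ht
    rw [Finset.mem_compl, hmem] at ht
    have h2 : g t ≤ μ := hg (by rw [Fin.le_def]; simp only; omega)
    exact mul_nonpos_of_nonpos_of_nonneg (by linarith) (hc0 t)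
  have e2 : ∑ i, (g i - μ) * c i ≤ ∑ t ∈ T, (g t - μ) := by
    calc ∑ i, (g i - μ) * c i
        = (∑ t ∈ T, (g t - μ) * c t) + ∑ t ∈ Tᶜ, (g t - μ) * c t :=
          (Finset.sum_add_sum_compl T _).symm
      _ ≤ (∑ t ∈ T, (g t - μ)) + 0 :=
          add_le_add (Finset.sum_le_sum hTle) (Finset.sum_nonpos hTcle)
      _ = ∑ t ∈ T, (g t - μ) := add_zero _
  have e3 : ∑ t ∈ T, (g t - μ) = (∑ t ∈ T, g t) - μ * k := by
    rw [Finset.sum_sub_distrib, Finset.sum_const, hcard, nsmul_eq_mul, mul_comm]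
  rw [e1, ← hTsum]
  linarith

/-- The quadratic form of a Hermitian matrix expanded in its eigenbasis. -/
lemma kyfan_quad {n : ℕ} (A : Matrix (Fin n) (Fin n) ℂ) (hA : A.IsHermitian)
    (y : EuclideanSpace ℂ (Fin n)) :
    (star (y : Fin n → ℂ) ⬝ᵥ (A *ᵥ (y : Fin n → ℂ))).re
      = ∑ i, hA.eigenvalues i * ‖(inner ℂ (hA.eigenvectorBasis i) y : ℂ)‖ ^ 2 := by
  set v := hA.eigenvectorBasis with hv
  set z : EuclideanSpace ℂ (Fin n) := (WithLp.equiv 2 _).symm (A *ᵥ (y : Fin n → ℂ)) with hz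
  have h0 : star (y : Fin n → ℂ) ⬝ᵥ (A *ᵥ (y : Fin n → ℂ)) = inner ℂ y z := by
    rw [EuclideanSpace.inner_eq_star_dotProduct]
    exact dotProduct_comm _ _
  have h1 : ∀ i, (inner ℂ (v i) z : ℂ) = (hA.eigenvalues i : ℂ) * inner ℂ (v i) y := by
    intro i
    rw [EuclideanSpace.inner_eq_star_dotProduct]
    have hvm : star (⇑(v i)) ᵥ* A = star (A *ᵥ ⇑(v i)) := by
      rw [Matrix.star_mulVec, hA.eq]
    have hze : z.ofLp = A *ᵥ (y : Fin n → ℂ) := rfl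
    rw [hze, dotProduct_comm, dotProduct_mulVec, hvm, hA.mulVec_eigenvectorBasis,
      EuclideanSpace.inner_eq_star_dotProduct, star_smul, smul_dotProduct]
    simp [dotProduct, RCLike.real_smul_eq_coe_mul, hv, mul_comm]
  have h2 := v.sum_inner_mul_inner y z
  rw [h0, ← h2, Complex.re_sum]
  refine Finset.sum_congr rfl fun i _ => ?_
  rw [h1, ← inner_conj_symm y (v i)]
  set w : ℂ := inner ℂ (v i) y with hw
  rw [mul_comm ((starRingEnd ℂ) w) _, mul_assoc, Complex.mul_conj', ← Complex.ofReal_pow,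
    ← Complex.ofReal_mul, Complex.ofReal_re]

/-- Parseval's identity for an orthonormal basis of `ℂⁿ`. -/
lemma kyfan_parseval {n : ℕ} (v : OrthonormalBasis (Fin n) ℂ (EuclideanSpace ℂ (Fin n)))
    (y : EuclideanSpace ℂ (Fin n)) :
    ∑ i, ‖(inner ℂ (v i) y : ℂ)‖ ^ 2 = ‖y‖ ^ 2 := by
  have h := congrArg Complex.re (v.sum_inner_mul_inner y y)
  rw [Complex.re_sum] at h
  rw [← inner_self_eq_norm_sq (𝕜 := ℂ) y, RCLike.re_to_complex, ← h]
  refine Finset.sum_congr rfl fun i _ => ?_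
  rw [← inner_conj_symm y (v i)]
  set w : ℂ := inner ℂ (v i) y with hw
  rw [mul_comm ((starRingEnd ℂ) w) _, Complex.mul_conj', ← Complex.ofReal_pow,
    Complex.ofReal_re]

/-- **Ky Fan's maximum principle.** For a Hermitian `A` and `1 ≤ k ≤ n`, the sum of
the `k` largest eigenvalues of `A` is the maximum of `∑_{j=1}^k ⟨A xⱼ, xⱼ⟩` over all
orthonormal families `x₁, …, x_k` in `ℂⁿ`. -/
theorem ky_fan_maximum_principle {n : ℕ} (A : Matrix (Fin n) (Fin n) ℂ)
    (hA : A.IsHermitian) (k : ℕ) (hk1 : 1 ≤ k) (hkn : k ≤ n) :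
    IsGreatest
      {s : ℝ | ∃ x : Fin k → EuclideanSpace ℂ (Fin n), Orthonormal ℂ x ∧
        s = ∑ j, (star (x j : Fin n → ℂ) ⬝ᵥ (A *ᵥ (x j : Fin n → ℂ))).re}
      (∑ j ∈ Finset.range k, lam A j) := by
  classical
  set v := hA.eigenvectorBasis with hv
  set σ := Tuple.sort hA.eigenvalues with hσ
  have hlam : ∑ j ∈ Finset.range k, lam A j =
      ∑ j : Fin k, hA.eigenvalues (σ ((Fin.castLE hkn j).rev)) := by
    rw [← Fin.sum_univ_eq_sum_range]
    refine Finset.sum_congr rfl fun j _ => ?_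
    have hj : (j : ℕ) < n := lt_of_lt_of_le j.isLt hkn
    rw [lam, dif_pos hA, dif_pos hj]
    rfl
  constructor
  · -- membership: take the top-k eigenvectors
    have hfinj : Function.Injective (fun j : Fin k => σ ((Fin.castLE hkn j).rev)) := by
      intro a b h
      have := σ.injective h
      have h2 := congrArg Fin.val this
      simp only [Fin.val_rev, Fin.coe_castLE] at h2
      exact Fin.ext (by omega)
    refine ⟨fun j => v (σ ((Fin.castLE hkn j).rev)), v.orthonormal.comp _ hfinj, ?_⟩
    rw [hlam]
    refine Finset.sum_congr rfl fun j _ => ?_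
    rw [hA.eigenvalues_eq]
    rfl
  · -- upper bound
    rintro s ⟨x, hx, rfl⟩
    set c : Fin n → ℝ := fun i => ∑ j, ‖(inner ℂ (v i) (x j) : ℂ)‖ ^ 2 with hc
    have hc0 : ∀ i, 0 ≤ c i :=
      fun i => Finset.sum_nonneg fun j _ => by positivity
    have hc1 : ∀ i, c i ≤ 1 := by
      intro i
      have hb := hx.sum_inner_products_le (s := Finset.univ) (v i)
      have hn : ‖(v i : EuclideanSpace ℂ (Fin n))‖ = 1 := v.orthonormal.1 i
      calc c i = ∑ j, ‖(inner ℂ (x j) (v i) : ℂ)‖ ^ 2 :=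
            Finset.sum_congr rfl fun j _ => by rw [norm_inner_symm]
        _ ≤ ‖(v i : EuclideanSpace ℂ (Fin n))‖ ^ 2 := hb
        _ = 1 := by rw [hn]; norm_num
    have hcsum : ∑ i, c i = k := by
      rw [hc, Finset.sum_comm]
      have : ∀ j : Fin k, ∑ i, ‖(inner ℂ (v i) (x j) : ℂ)‖ ^ 2 = 1 := by
        intro j
        rw [kyfan_parseval v (x j), hx.1 j]
        norm_num
      exact (Finset.sum_congr rfl fun j _ => this j).trans (by simp)
    have hquad : ∑ j, (star (x j : Fin n → ℂ) ⬝ᵥ (A *ᵥ (x j : Fin n → ℂ))).re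
        = ∑ i, hA.eigenvalues i * c i := by
      calc ∑ j, (star (x j : Fin n → ℂ) ⬝ᵥ (A *ᵥ (x j : Fin n → ℂ))).re
          = ∑ j, ∑ i, hA.eigenvalues i * ‖(inner ℂ (v i) (x j) : ℂ)‖ ^ 2 :=
            Finset.sum_congr rfl fun j _ => kyfan_quad A hA (x j)
        _ = ∑ i, ∑ j, hA.eigenvalues i * ‖(inner ℂ (v i) (x j) : ℂ)‖ ^ 2 := Finset.sum_comm
        _ = ∑ i, hA.eigenvalues i * c i :=
            Finset.sum_congr rfl fun i _ => (Finset.mul_sum _ _ _).symm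
    rw [hquad, hlam]
    have hperm : ∑ i, hA.eigenvalues i * c i
        = ∑ t, (hA.eigenvalues ∘ σ) t * (c ∘ σ) t :=
      (Equiv.sum_comp σ (fun i => hA.eigenvalues i * c i)).symm
    rw [hperm]
    have hσsum : ∑ t, (c ∘ σ) t = k := by
      rw [Function.comp_def, Equiv.sum_comp σ c, hcsum]
    exact kyfan_key hk1 hkn (hA.eigenvalues ∘ σ) (Tuple.monotone_sort hA.eigenvalues)
      (c ∘ σ) (fun t => hc0 (σ t)) (fun t => hc1 (σ t)) hσsum
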